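/- Let a < b be real numbers, let V be a finite-dimensional linear subspace of the space C([a, b], ℝ) of continuous real-valued functions on [a, b], and let Σ be a finite subset of [a, b]. Suppose δ : Σ → V is a family such that for every q ∈ Σ and every v ∈ V, ∫_{[a,b]} v(x) δ_q(x) dx = v(q), and suppose the family (δ_q)_{q ∈ Σ} is a basis of V. If u, v ∈ V satisfy u(q) = v(q) for every q ∈ Σ, then u = v. -/
import Mathlib

attribute [local instance] MeasureTheory.Measure.Subtype.measureSpace

open MeasureTheory

lemma icc_finiteMeasure (a b : ℝ) : IsFiniteMeasure (volume : Measure (Set.Icc a b)) := by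
  constructor
  rw [Measure.Subtype.volume_univ nullMeasurableSet_Icc, Real.volume_Icc]
  exact ENNReal.ofReal_lt_top

lemma icc_openPos (a b : ℝ) (hab : a < b) :
    (volume : Measure (Set.Icc a b)).IsOpenPosMeasure := by
  constructor
  intro U hU hUne
  have hemb : MeasurableEmbedding (Subtype.val : Set.Icc a b → ℝ) :=
    MeasurableEmbedding.subtype_coe measurableSet_Icc
  rw [Measure.Subtype.volume_def, hemb.comap_apply]
  obtain ⟨O, hO, rfl⟩ := isOpen_induced_iff.mp hU
  obtain ⟨x, hx⟩ := hUne
  have hxO : (x : ℝ) ∈ O := hx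
  obtain ⟨ε, hε, hball⟩ := Metric.isOpen_iff.mp hO x hxO
  set c := max a ((x : ℝ) - ε / 2) with hc
  set d := min b ((x : ℝ) + ε / 2) with hd
  have hxa : a ≤ (x : ℝ) := x.2.1
  have hxb : (x : ℝ) ≤ b := x.2.2
  have hcd : c < d := by
    apply max_lt <;> apply lt_min
    · exact hab
    · linarith
    · linarith
    · linarith
  have hsub : Set.Ioo c d ⊆ Subtype.val '' ((Subtype.val : Set.Icc a b → ℝ) ⁻¹' O) := by
    intro y hy
    have hya : a ≤ y := le_of_lt (lt_of_le_of_lt (le_max_left _ _) hy.1)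
    have hyb : y ≤ b := le_of_lt (lt_of_lt_of_le hy.2 (min_le_left _ _))
    have hyO : y ∈ O := by
      apply hball
      have h1 : (x : ℝ) - ε / 2 < y := lt_of_le_of_lt (le_max_right a _) hy.1
      have h2 : y < (x : ℝ) + ε / 2 := lt_of_lt_of_le hy.2 (min_le_right b _)
      rw [Metric.mem_ball, Real.dist_eq, abs_lt]
      constructor <;> linarith
    exact ⟨⟨y, hya, hyb⟩, hyO, rfl⟩
  refine ne_of_gt ?_
  calc (0 : ENNReal) < ENNReal.ofReal (d - c) := by
        simp [ENNReal.ofReal_pos]; linarith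
    _ = volume (Set.Ioo c d) := (Real.volume_Ioo).symm
    _ ≤ _ := measure_mono hsub

theorem equal_on_independent_points
    (a b : ℝ) (hab : a < b) (V : Submodule ℝ C(Set.Icc a b, ℝ))
    [FiniteDimensional ℝ V] (S : Finset (Set.Icc a b))
    (δ : Set.Icc a b → C(Set.Icc a b, ℝ))
    (hδV : ∀ q ∈ S, δ q ∈ V)
    (hδ : ∀ q ∈ S, ∀ v ∈ V, ∫ x : Set.Icc a b, v x * δ q x = v q)
    (hind : LinearIndependent ℝ (fun q : {q // q ∈ S} => δ q))
    (hspan : Submodule.span ℝ (δ '' ↑S) = V)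
    (u v : C(Set.Icc a b, ℝ)) (hu : u ∈ V) (hv : v ∈ V)
    (huv : ∀ q ∈ S, u q = v q) :
    u = v := by
  haveI := icc_finiteMeasure a b
  haveI := icc_openPos a b hab
  set w : C(Set.Icc a b, ℝ) := u - v with hw
  have hwV : w ∈ V := sub_mem hu hv
  have hwS : ∀ q ∈ S, w q = 0 := by
    intro q hq
    simp [hw, huv q hq]
  have hrange : Set.range (fun q : {q // q ∈ S} => δ q) = δ '' ↑S := by
    ext f
    constructor
    · rintro ⟨⟨q, hq⟩, rfl⟩; exact ⟨q, hq, rfl⟩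
    · rintro ⟨q, hq, rfl⟩; exact ⟨⟨q, hq⟩, rfl⟩
  have hwspan : w ∈ Submodule.span ℝ (Set.range (fun q : {q // q ∈ S} => δ q)) := by
    rw [hrange, hspan]; exact hwV
  obtain ⟨c, hc⟩ := (Submodule.mem_span_range_iff_exists_fun ℝ).mp hwspan
  -- integrability of products
  have hint : ∀ (f g : C(Set.Icc a b, ℝ)),
      Integrable (fun x : Set.Icc a b => f x * g x) volume := by
    intro f g
    exact (BoundedContinuousFunction.mkOfCompact (f * g)).integrable _
  have hzero : ∫ x : Set.Icc a b, w x * w x = 0 := by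
    have heq : ∀ x : Set.Icc a b,
        w x * w x = ∑ i : {q // q ∈ S}, c i * (w x * δ i x) := by
      intro x
      have : w x = ∑ i : {q // q ∈ S}, c i * δ i x := by
        conv_lhs => rw [← hc]
        simp
      calc w x * w x = w x * ∑ i : {q // q ∈ S}, c i * δ i x := by rw [← this]
        _ = ∑ i : {q // q ∈ S}, c i * (w x * δ i x) := by
            rw [Finset.mul_sum]; congr 1; ext i; ring
    rw [show (fun x : Set.Icc a b => w x * w x)
        = fun x => ∑ i : {q // q ∈ S}, c i * (w x * δ i x) from funext heq]
    rw [integral_finset_sum]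
    · apply Finset.sum_eq_zero
      intro i _
      rw [integral_const_mul, hδ i.1 i.2 w hwV, hwS i.1 i.2, mul_zero]
    · intro i _
      exact (hint w (δ i)).const_mul _
  have hae : (fun x : Set.Icc a b => w x * w x) =ᵐ[volume] 0 := by
    rw [← integral_eq_zero_iff_of_nonneg (fun x => mul_self_nonneg (w x)) (hint w w)]
    exact hzero
  have hwzero : ∀ x, w x * w x = 0 := by
    have := (Continuous.ae_eq_iff_eq volume
      (w.continuous.mul w.continuous)
      continuous_const).mp hae
    intro x; exact congrFun this x
  ext x
  have := hwzero x
  have hwx : w x = 0 := by nlinarith [this]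
  have : u x - v x = 0 := by simpa [hw] using hwx
  linarith
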